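/- (Nayak's random access code bound.) Let n, m ≥ 1, let ρ_x be a density matrix on ℂ^{2^m} for each x ∈ {0,1}^n, let (E_i^0, E_i^1) be a two-outcome POVM on ℂ^{2^m} for each i ∈ [n], and let p ≥ 1/2. If tr(ρ_x · E_i^{x_i}) ≥ p for all x ∈ {0,1}^n and all i ∈ [n], then m ≥ (1 − H(p)) · n. -/

import Mathlib

open ComplexOrder Matrix

/-- The binary entropy function `H(p) = -p log₂ p - (1-p) log₂ (1-p)`. -/
noncomputable def binEnt (p : ℝ) : ℝ :=
  -p * Real.logb 2 p - (1 - p) * Real.logb 2 (1 - p)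

namespace NayakAux

open scoped Matrix.Norms.L2Operator

variable {ι : Type*} [Fintype ι] [DecidableEq ι]

/-- The sign of a boolean, as a real number. -/
def sgn (b : Bool) : ℝ := if b then 1 else -1

@[simp] lemma sgn_true : sgn true = 1 := rfl
@[simp] lemma sgn_false : sgn false = -1 := rfl

lemma psd_trace_re_nonneg {A : Matrix ι ι ℂ} (hA : A.PosSemidef) : 0 ≤ A.trace.re := by
  exact (Complex.le_def.mp hA.trace_nonneg).1

open scoped MatrixOrder in
lemma exists_sqrt_aux {A : Matrix ι ι ℂ} (hA : A.PosSemidef) :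
    ∃ Q : Matrix ι ι ℂ, Qᴴ = Q ∧ Q * Q = A :=
  ⟨CFC.sqrt A, (CFC.sqrt_nonneg A).posSemidef.1, CFC.sqrt_mul_sqrt_self A hA.nonneg⟩

open scoped MatrixOrder in
lemma psd_mul_trace_re_nonneg {A B : Matrix ι ι ℂ} (hA : A.PosSemidef)
    (hB : B.PosSemidef) : 0 ≤ (A * B).trace.re := by
  have h1 : (CFC.sqrt A * B * CFC.sqrt A).trace = (A * B).trace := by
    rw [Matrix.trace_mul_cycle, CFC.sqrt_mul_sqrt_self A hA.nonneg]
  rw [← h1]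
  have h2 : (CFC.sqrt A * B * CFC.sqrt A).PosSemidef := by
    have := hB.mul_mul_conjTranspose_same (CFC.sqrt A)
    rwa [(CFC.sqrt_nonneg A).posSemidef.1] at this
  exact psd_trace_re_nonneg h2

lemma herm_pow_eq {S : Matrix ι ι ℂ} (hS : S.IsHermitian) (q : ℕ) :
    S ^ q = (hS.eigenvectorUnitary : Matrix ι ι ℂ) *
      (Matrix.diagonal (RCLike.ofReal ∘ hS.eigenvalues)) ^ q *
      (star (hS.eigenvectorUnitary : Matrix ι ι ℂ)) := by
  induction q with
  | zero =>
    simpa [Matrix.mul_one] using (hS.eigenvectorUnitary.2.2).symm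
  | succ q ih =>
    have hUU : (star (hS.eigenvectorUnitary : Matrix ι ι ℂ)) *
        (hS.eigenvectorUnitary : Matrix ι ι ℂ) = 1 := hS.eigenvectorUnitary.2.1
    calc S ^ (q + 1) = S ^ q * S := pow_succ S q
    _ = ((hS.eigenvectorUnitary : Matrix ι ι ℂ) *
          (Matrix.diagonal (RCLike.ofReal ∘ hS.eigenvalues)) ^ q *
          (star (hS.eigenvectorUnitary : Matrix ι ι ℂ))) *
        ((hS.eigenvectorUnitary : Matrix ι ι ℂ) *
          (Matrix.diagonal (RCLike.ofReal ∘ hS.eigenvalues)) *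
          (star (hS.eigenvectorUnitary : Matrix ι ι ℂ))) := by
        rw [← ih, ← (hS.spectral_theorem.trans (Unitary.conjStarAlgAut_apply ..))]
    _ = _ := by
        rw [pow_succ]
        simp only [Matrix.mul_assoc]
        rw [← Matrix.mul_assoc (star (hS.eigenvectorUnitary : Matrix ι ι ℂ))
          (hS.eigenvectorUnitary : Matrix ι ι ℂ), hUU, Matrix.one_mul]

lemma herm_trace_pow {S : Matrix ι ι ℂ} (hS : S.IsHermitian) (q : ℕ) :
    (S ^ q).trace = ((∑ j, hS.eigenvalues j ^ q : ℝ) : ℂ) := by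
  rw [herm_pow_eq hS q, Matrix.trace_mul_cycle,
    hS.eigenvectorUnitary.2.1, Matrix.one_mul, Matrix.diagonal_pow, Matrix.trace_diagonal]
  push_cast
  rfl

lemma herm_smul_one_sub_posSemidef {S : Matrix ι ι ℂ} (hS : S.IsHermitian) {c : ℝ}
    (hc : ∀ j, hS.eigenvalues j ≤ c) : ((c : ℂ) • 1 - S).PosSemidef := by
  have hUU : (star (hS.eigenvectorUnitary : Matrix ι ι ℂ)) *
      (hS.eigenvectorUnitary : Matrix ι ι ℂ) = 1 := hS.eigenvectorUnitary.2.1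
  have hUU' : (hS.eigenvectorUnitary : Matrix ι ι ℂ) *
      (star (hS.eigenvectorUnitary : Matrix ι ι ℂ)) = 1 := hS.eigenvectorUnitary.2.2
  have key : (c : ℂ) • 1 - S = (hS.eigenvectorUnitary : Matrix ι ι ℂ) *
      (Matrix.diagonal (fun j => ((c - hS.eigenvalues j : ℝ) : ℂ))) *
      (star (hS.eigenvectorUnitary : Matrix ι ι ℂ)) := by
    have h1 : (c : ℂ) • (1 : Matrix ι ι ℂ) = (hS.eigenvectorUnitary : Matrix ι ι ℂ) *
        ((c : ℂ) • 1) * (star (hS.eigenvectorUnitary : Matrix ι ι ℂ)) := by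
      rw [Matrix.mul_smul, Matrix.mul_one, Matrix.smul_mul, hUU']
    have h2 : Matrix.diagonal (fun j => ((c - hS.eigenvalues j : ℝ) : ℂ)) =
        (c : ℂ) • 1 - Matrix.diagonal (RCLike.ofReal ∘ hS.eigenvalues) := by
      rw [Matrix.smul_one_eq_diagonal, Matrix.diagonal_sub]
      congr 1
      funext j
      push_cast
      rfl
    rw [h2, Matrix.mul_sub, Matrix.sub_mul, ← h1, ← (hS.spectral_theorem.trans (Unitary.conjStarAlgAut_apply ..))]
  rw [key]
  have hdiag : (Matrix.diagonal (fun j => ((c - hS.eigenvalues j : ℝ) : ℂ))).PosSemidef := by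
    refine Matrix.posSemidef_diagonal_iff.mpr fun j => ?_
    rw [Complex.zero_le_real]
    linarith [hc j]
  have := hdiag.mul_mul_conjTranspose_same (hS.eigenvectorUnitary : Matrix ι ι ℂ)
  rwa [← Matrix.star_eq_conjTranspose] at this

/-- If `ρ` is a density matrix and `tr(ρS).re ≥ c` then `S` has an eigenvalue `≥ c`. -/
lemma exists_eigen_ge [Nonempty ι] {ρ S : Matrix ι ι ℂ} (hρ : ρ.PosSemidef)
    (hρ1 : ρ.trace = 1) (hS : S.IsHermitian) {c : ℝ}
    (hc : c ≤ ((ρ * S).trace).re) : ∃ j, c ≤ hS.eigenvalues j := by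
  obtain ⟨j0, -, hj0⟩ := Finset.exists_max_image Finset.univ hS.eigenvalues
    ⟨Classical.arbitrary ι, Finset.mem_univ _⟩
  refine ⟨j0, ?_⟩
  set M := hS.eigenvalues j0 with hM
  have hpsd : ((M : ℂ) • 1 - S).PosSemidef :=
    herm_smul_one_sub_posSemidef hS fun j => hj0 j (Finset.mem_univ j)
  have h0 : 0 ≤ ((ρ * ((M : ℂ) • 1 - S)).trace).re := psd_mul_trace_re_nonneg hρ hpsd
  have h1 : (ρ * ((M : ℂ) • 1 - S)).trace = (M : ℂ) - (ρ * S).trace := by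
    rw [Matrix.mul_sub, Matrix.trace_sub, Matrix.mul_smul, Matrix.mul_one,
      Matrix.trace_smul, hρ1]
    simp
  rw [h1, Complex.sub_re, Complex.ofReal_re] at h0
  linarith

section Norms

lemma dot_self_re (v : ι → ℂ) :
    (dotProduct (star v) v).re = ∑ i, Complex.normSq (v i) := by
  rw [dotProduct, Complex.re_sum]
  refine Finset.sum_congr rfl fun i _ => ?_
  simp [Complex.mul_conj', Complex.normSq_apply]

lemma opNorm_le_of_normSq {A : Matrix ι ι ℂ} {c : ℝ} (hc : 0 ≤ c)
    (h : ∀ v : ι → ℂ, ∑ i, Complex.normSq ((A *ᵥ v) i) ≤ c ^ 2 * ∑ i, Complex.normSq (v i)) :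
    ‖A‖ ≤ c := by
  have hx : ∀ (y : EuclideanSpace ℂ ι), ‖y‖ = Real.sqrt (∑ i, Complex.normSq (y i)) := by
    intro y
    rw [EuclideanSpace.norm_eq]
    congr 1
    refine Finset.sum_congr rfl fun i _ => ?_
    rw [Complex.sq_norm]
  rw [Matrix.l2_opNorm_def]
  refine ContinuousLinearMap.opNorm_le_bound _ hc fun x => ?_
  show ‖(Matrix.toEuclideanLin A) x‖ ≤ c * ‖x‖
  rw [hx ((Matrix.toEuclideanLin A) x), hx x]
  have hco : ∀ i, ((Matrix.toEuclideanLin A) x) i = (A *ᵥ (WithLp.equiv 2 (ι → ℂ)) x) i :=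
    fun i => rfl
  calc Real.sqrt (∑ i, Complex.normSq (((Matrix.toEuclideanLin A) x) i))
      = Real.sqrt (∑ i, Complex.normSq ((A *ᵥ (WithLp.equiv 2 (ι → ℂ)) x) i)) := by
        simp only [hco]
    _ ≤ Real.sqrt (c ^ 2 * ∑ i, Complex.normSq (((WithLp.equiv 2 (ι → ℂ)) x) i)) :=
        Real.sqrt_le_sqrt (h _)
    _ = c * Real.sqrt (∑ i, Complex.normSq (((WithLp.equiv 2 (ι → ℂ)) x) i)) := by
        rw [Real.sqrt_mul (sq_nonneg c), Real.sqrt_sq hc]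
    _ = c * Real.sqrt (∑ i, Complex.normSq (x i)) := rfl

lemma norm_le_one_of_sub_sq_psd {D : Matrix ι ι ℂ} (hD : D.IsHermitian)
    (h : ((1 : Matrix ι ι ℂ) - D * D).PosSemidef) : ‖D‖ ≤ 1 := by
  refine opNorm_le_of_normSq zero_le_one fun v => ?_
  have h0 := h.dotProduct_mulVec_nonneg v
  have h1 : dotProduct (star v) (((1 : Matrix ι ι ℂ) - D * D) *ᵥ v) =
      dotProduct (star v) v -
        dotProduct (star (D *ᵥ v)) (D *ᵥ v) := by
    rw [Matrix.sub_mulVec, dotProduct_sub, Matrix.one_mulVec]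
    congr 1
    rw [Matrix.star_mulVec, hD.eq, ← Matrix.mulVec_mulVec, Matrix.dotProduct_mulVec]
  have h0re : 0 ≤ (dotProduct (star v) (((1 : Matrix ι ι ℂ) - D * D) *ᵥ v)).re :=
    (Complex.le_def.mp h0).1
  rw [h1, Complex.sub_re, dot_self_re, dot_self_re] at h0re
  rw [one_pow, one_mul]
  linarith

lemma norm_one_le_one : ‖(1 : Matrix ι ι ℂ)‖ ≤ 1 := by
  refine opNorm_le_of_normSq zero_le_one fun v => ?_
  simp [Matrix.one_mulVec]

lemma norm_list_prod_le_one {l : List (Matrix ι ι ℂ)} (h : ∀ A ∈ l, ‖A‖ ≤ 1) :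
    ‖l.prod‖ ≤ 1 := by
  induction l with
  | nil => simpa using norm_one_le_one
  | cons A l ih =>
    rw [List.prod_cons]
    have hA : ‖A‖ ≤ 1 := h A (List.mem_cons_self)
    have hl : ‖l.prod‖ ≤ 1 := ih fun B hB => h B (List.mem_cons_of_mem A hB)
    calc ‖A * l.prod‖ ≤ ‖A‖ * ‖l.prod‖ := Matrix.l2_opNorm_mul A l.prod
    _ ≤ 1 * 1 := mul_le_mul hA hl (norm_nonneg _) zero_le_one
    _ = 1 := by norm_num

lemma entry_re_le_of_norm_le_one {M : Matrix ι ι ℂ} (h : ‖M‖ ≤ 1) (i : ι) :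
    (M i i).re ≤ 1 := by
  set y : EuclideanSpace ℂ ι :=
    (EuclideanSpace.equiv ι ℂ).symm (M *ᵥ (EuclideanSpace.single i (1 : ℂ))) with hy
  have h1 : ‖y‖ ≤ ‖M‖ * ‖EuclideanSpace.single i (1 : ℂ)‖ :=
    Matrix.l2_opNorm_mulVec M (EuclideanSpace.single i (1 : ℂ))
  rw [EuclideanSpace.norm_single] at h1
  have h2 : ‖y‖ ≤ 1 := by
    calc ‖y‖ ≤ ‖M‖ * ‖(1 : ℂ)‖ := h1
    _ ≤ 1 := by simpa using h
  have hyi : y i = M i i := by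
    show (M *ᵥ ((EuclideanSpace.single i (1 : ℂ)) : ι → ℂ)) i = M i i
    have : ((EuclideanSpace.single i (1 : ℂ)) : ι → ℂ) = Pi.single i (1 : ℂ) := rfl
    rw [this, Matrix.mulVec_single]
    simp
  have h3 : (M i i).re ≤ ‖y‖ := by
    calc (M i i).re ≤ ‖M i i‖ := by
          exact Complex.re_le_norm _
    _ = ‖y i‖ := by rw [hyi]
    _ ≤ ‖y‖ := by
        rw [EuclideanSpace.norm_eq]
        refine Real.le_sqrt_of_sq_le ?_
        exact Finset.single_le_sum (fun j _ => sq_nonneg ‖y j‖) (Finset.mem_univ i)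
  exact h3.trans h2

lemma trace_re_le_card_of_norm_le_one {M : Matrix ι ι ℂ} (h : ‖M‖ ≤ 1) :
    (M.trace).re ≤ Fintype.card ι := by
  rw [Matrix.trace, Complex.re_sum]
  calc (∑ i, (M.diag i).re) ≤ ∑ _i : ι, (1 : ℝ) :=
    Finset.sum_le_sum fun i _ => entry_re_le_of_norm_le_one h i
  _ = Fintype.card ι := by simp

end Norms

/-- Noncommutative expansion of a power of a sum as a sum over words. -/
lemma sum_pow_words {R : Type*} [Ring R] (f : ι → R) :
    ∀ q : ℕ, (∑ i, f i) ^ q = ∑ w : Fin q → ι, (List.ofFn fun k => f (w k)).prod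
  | 0 => by simp
  | (q + 1) => by
    rw [pow_succ', sum_pow_words f q, Finset.sum_mul_sum]
    have e0 := Fintype.sum_equiv (Fin.consEquiv fun _ => ι)
      (fun p : ι × (Fin q → ι) =>
        (List.ofFn fun k => f ((Fin.consEquiv fun _ => ι) p k)).prod)
      (fun w : Fin (q + 1) → ι => (List.ofFn fun k => f (w k)).prod) (fun p => rfl)
    rw [← e0, Fintype.sum_prod_type]
    refine Finset.sum_congr rfl fun i _ => Finset.sum_congr rfl fun w _ => ?_
    rw [List.ofFn_succ]
    simp only [Fin.consEquiv_apply, Fin.cons_zero, Fin.cons_succ, List.prod_cons]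

lemma listprod_ofFn_smul {q : ℕ} (c : Fin q → ℂ) (M : Fin q → Matrix ι ι ℂ) :
    (List.ofFn fun k => c k • M k).prod = (∏ k, c k) • (List.ofFn M).prod := by
  induction q with
  | zero => simp
  | succ q ih =>
    rw [List.ofFn_succ, List.ofFn_succ, List.prod_cons, List.prod_cons,
      ih (fun k => c k.succ) (fun k => M k.succ), Fin.prod_univ_succ]
    rw [smul_mul_assoc, mul_smul_comm, smul_smul]

end NayakAux

namespace NayakAux

open scoped Matrix.Norms.L2Operator

/-- The core counting bound: a matrix-Chernoff style estimate. -/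
lemma core {n N : ℕ} (hN : 0 < N) (t c : ℝ) (ht : 0 ≤ t)
    (D : Fin n → Matrix (Fin N) (Fin N) ℂ) (hD : ∀ i, (D i).IsHermitian)
    (hD2 : ∀ i, ((1 : Matrix (Fin N) (Fin N) ℂ) - D i * D i).PosSemidef)
    (hc : ∀ x : Fin n → Bool, ∃ ρ : Matrix (Fin N) (Fin N) ℂ, ρ.PosSemidef ∧ ρ.trace = 1 ∧
      c ≤ ((ρ * ∑ i, ((sgn (x i) : ℂ) • D i)).trace).re) :
    (2 : ℝ) ^ n * Real.exp (t * c) ≤ N * (Real.exp t + Real.exp (-t)) ^ n := by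
  classical
  haveI : Nonempty (Fin N) := ⟨⟨0, hN⟩⟩
  set S : (Fin n → Bool) → Matrix (Fin N) (Fin N) ℂ :=
    fun x => ∑ i, ((sgn (x i) : ℂ) • D i) with hS
  have hSH : ∀ x, (S x).IsHermitian := by
    intro x
    show (S x)ᴴ = S x
    simp only [hS]
    rw [Matrix.conjTranspose_sum]
    refine Finset.sum_congr rfl fun i _ => ?_
    rw [Matrix.conjTranspose_smul, Complex.star_def, Complex.conj_ofReal, (hD i).eq]
  set lam : (Fin n → Bool) → Fin N → ℝ := fun x => (hSH x).eigenvalues with hlam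
  have key1 : ∀ x, ∃ j, c ≤ lam x j := by
    intro x
    obtain ⟨ρ, hρ1, hρ2, hρ3⟩ := hc x
    exact exists_eigen_ge hρ1 hρ2 (hSH x) hρ3
  -- Step B : moment comparison
  have key2 : ∀ q : ℕ, (∑ x : Fin n → Bool, ∑ j, lam x j ^ q) ≤
      (N : ℝ) * ∑ x : Fin n → Bool, (∑ i, sgn (x i)) ^ q := by
    intro q
    set W : (Fin q → Fin n) → Matrix (Fin N) (Fin N) ℂ :=
      fun w => (List.ofFn fun k => D (w k)).prod with hW
    have hWnorm : ∀ w, ((W w).trace).re ≤ (N : ℝ) := by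
      intro w
      have h1 : ‖W w‖ ≤ 1 := by
        refine norm_list_prod_le_one fun A hA => ?_
        obtain ⟨k, hk⟩ := List.mem_ofFn.mp hA
        rw [← hk]
        exact norm_le_one_of_sub_sq_psd (hD _) (hD2 _)
      simpa using trace_re_le_card_of_norm_le_one h1
    have hcw : ∀ w : Fin q → Fin n, (0:ℝ) ≤ ∑ x : Fin n → Bool, ∏ k, sgn (x (w k)) := by
      intro w
      have hprod1 : ∀ x : Fin n → Bool, (∏ k, sgn (x (w k)))
          = ∏ i, sgn (x i) ^ (Finset.univ.filter fun k => w k = i).card := by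
        intro x
        rw [← Finset.prod_fiberwise' Finset.univ w (fun i => sgn (x i))]
        refine Finset.prod_congr rfl fun i _ => ?_
        rw [Finset.prod_const]
      have e2 := Finset.prod_univ_sum (fun _ : Fin n => (Finset.univ : Finset Bool))
        (fun i b => sgn b ^ (Finset.univ.filter fun k => w k = i).card)
      rw [Fintype.piFinset_univ] at e2
      simp_rw [hprod1]
      rw [← e2]
      refine Finset.prod_nonneg fun i _ => ?_
      rw [Fintype.sum_bool, sgn_true, sgn_false, one_pow]
      rcases Nat.even_or_odd ((Finset.univ.filter fun k => w k = i).card) with he | ho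
      · rw [he.neg_one_pow]; norm_num
      · rw [ho.neg_one_pow]; norm_num
    have hexpand : ∀ x : Fin n → Bool, (((S x) ^ q).trace).re =
        ∑ w : Fin q → Fin n, (∏ k, sgn (x (w k))) * ((W w).trace).re := by
      intro x
      have e1 : (S x) ^ q = ∑ w : Fin q → Fin n,
          ((∏ k, sgn (x (w k)) : ℝ) : ℂ) • W w := by
        simp only [hS]
        rw [sum_pow_words (fun i => (sgn (x i) : ℂ) • D i) q]
        refine Finset.sum_congr rfl fun w _ => ?_
        rw [listprod_ofFn_smul (fun k => (sgn (x (w k)) : ℂ)) (fun k => D (w k))]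
        congr 1
        push_cast
        rfl
      rw [e1, Matrix.trace_sum, Complex.re_sum]
      refine Finset.sum_congr rfl fun w _ => ?_
      rw [Matrix.trace_smul, smul_eq_mul, Complex.re_ofReal_mul]
    have hscal : (∑ x : Fin n → Bool, (∑ i, sgn (x i)) ^ q)
        = ∑ w : Fin q → Fin n, ∑ x : Fin n → Bool, ∏ k, sgn (x (w k)) := by
      have e1 : ∀ x : Fin n → Bool, (∑ i, sgn (x i)) ^ q
          = ∑ w : Fin q → Fin n, ∏ k, sgn (x (w k)) := by
        intro x
        rw [sum_pow_words (fun i => sgn (x i)) q]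
        refine Finset.sum_congr rfl fun w _ => ?_
        rw [List.prod_ofFn]
      simp_rw [e1]
      rw [Finset.sum_comm]
    have hAq : ∀ x, (∑ j, lam x j ^ q) = (((S x) ^ q).trace).re := by
      intro x
      rw [herm_trace_pow (hSH x) q, Complex.ofReal_re]
    calc (∑ x : Fin n → Bool, ∑ j, lam x j ^ q)
        = ∑ x : Fin n → Bool, (((S x) ^ q).trace).re :=
          Finset.sum_congr rfl fun x _ => hAq x
      _ = ∑ w : Fin q → Fin n,
            (∑ x : Fin n → Bool, ∏ k, sgn (x (w k))) * ((W w).trace).re := by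
          simp_rw [hexpand]
          rw [Finset.sum_comm]
          simp_rw [← Finset.sum_mul]
      _ ≤ ∑ w : Fin q → Fin n, (∑ x : Fin n → Bool, ∏ k, sgn (x (w k))) * (N : ℝ) :=
          Finset.sum_le_sum fun w _ =>
            mul_le_mul_of_nonneg_left (hWnorm w) (hcw w)
      _ = (N : ℝ) * ∑ w : Fin q → Fin n, ∑ x : Fin n → Bool, ∏ k, sgn (x (w k)) := by
          rw [← Finset.sum_mul, mul_comm]
      _ = (N : ℝ) * ∑ x : Fin n → Bool, (∑ i, sgn (x i)) ^ q := by
          rw [← hscal]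
  -- series comparison
  have hsummable : ∀ y : ℝ, Summable (fun q : ℕ => (t * y) ^ q / (Nat.factorial q)) :=
    fun y => Real.summable_pow_div_factorial _
  have hexp_eq : ∀ y : ℝ, Real.exp (t * y) = ∑' q : ℕ, (t * y) ^ q / (Nat.factorial q) := by
    intro y
    rw [Real.exp_eq_exp_ℝ, NormedSpace.exp_eq_tsum_div]
  have main : (∑ x : Fin n → Bool, ∑ j, Real.exp (t * lam x j)) ≤
      (N : ℝ) * ∑ x : Fin n → Bool, Real.exp (t * ∑ i, sgn (x i)) := by
    have hstep1 : ∀ x : Fin n → Bool, (∑ j, Real.exp (t * lam x j)) =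
        ∑' q : ℕ, ∑ j, (t * lam x j) ^ q / (Nat.factorial q) := by
      intro x
      rw [show (∑ j, Real.exp (t * lam x j)) = ∑ j, ∑' q : ℕ, (t * lam x j) ^ q / (Nat.factorial q) from
        Finset.sum_congr rfl fun j _ => hexp_eq _]
      exact (Summable.tsum_finsetSum fun j _ => hsummable _).symm
    have hsum2 : ∀ x : Fin n → Bool, Summable fun q : ℕ => ∑ j, (t * lam x j) ^ q / (Nat.factorial q) :=
      fun x => summable_sum fun j _ => hsummable _
    have hL : (∑ x : Fin n → Bool, ∑ j, Real.exp (t * lam x j)) =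
        ∑' q : ℕ, ∑ x : Fin n → Bool, ∑ j, (t * lam x j) ^ q / (Nat.factorial q) := by
      rw [show (∑ x : Fin n → Bool, ∑ j, Real.exp (t * lam x j))
          = ∑ x : Fin n → Bool, ∑' q : ℕ, ∑ j, (t * lam x j) ^ q / (Nat.factorial q) from
        Finset.sum_congr rfl fun x _ => hstep1 x]
      exact (Summable.tsum_finsetSum fun x _ => hsum2 x).symm
    have hR : (∑ x : Fin n → Bool, Real.exp (t * ∑ i, sgn (x i))) =
        ∑' q : ℕ, ∑ x : Fin n → Bool, (t * ∑ i, sgn (x i)) ^ q / (Nat.factorial q) := by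
      rw [show (∑ x : Fin n → Bool, Real.exp (t * ∑ i, sgn (x i)))
          = ∑ x : Fin n → Bool, ∑' q : ℕ, (t * ∑ i, sgn (x i)) ^ q / (Nat.factorial q) from
        Finset.sum_congr rfl fun x _ => hexp_eq _]
      exact (Summable.tsum_finsetSum fun x _ => hsummable _).symm
    rw [hL, hR, ← tsum_mul_left]
    refine Summable.tsum_le_tsum ?_ (summable_sum fun x _ => hsum2 x)
      ((summable_sum fun (x : Fin n → Bool) _ => hsummable (∑ i, sgn (x i))).mul_left (N : ℝ))
    intro q
    have e0 : ∀ y : ℝ, (t * y) ^ q / (Nat.factorial q) = t ^ q / (Nat.factorial q) * y ^ q := by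
      intro y
      rw [mul_pow]
      ring
    have hnn : (0:ℝ) ≤ t ^ q / (Nat.factorial q) := by positivity
    simp_rw [e0, ← Finset.mul_sum]
    rw [mul_left_comm]
    exact mul_le_mul_of_nonneg_left (key2 q) hnn
  -- lower bound for the left side
  have hlow : (2:ℝ) ^ n * Real.exp (t * c) ≤
      ∑ x : Fin n → Bool, ∑ j, Real.exp (t * lam x j) := by
    have hx : ∀ x : Fin n → Bool, Real.exp (t * c) ≤ ∑ j, Real.exp (t * lam x j) := by
      intro x
      obtain ⟨j, hj⟩ := key1 x
      calc Real.exp (t * c) ≤ Real.exp (t * lam x j) :=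
            Real.exp_le_exp.mpr (mul_le_mul_of_nonneg_left hj ht)
        _ ≤ ∑ j', Real.exp (t * lam x j') :=
            Finset.single_le_sum (f := fun j' => Real.exp (t * lam x j'))
              (fun j' _ => (Real.exp_pos _).le) (Finset.mem_univ j)
    calc (2:ℝ) ^ n * Real.exp (t * c)
        = ∑ _x : Fin n → Bool, Real.exp (t * c) := by
          rw [Finset.sum_const, Finset.card_univ]
          rw [show Fintype.card (Fin n → Bool) = 2 ^ n by
            rw [Fintype.card_fun, Fintype.card_bool, Fintype.card_fin]]
          rw [nsmul_eq_mul]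
          push_cast
          ring
      _ ≤ ∑ x : Fin n → Bool, ∑ j, Real.exp (t * lam x j) :=
          Finset.sum_le_sum fun x _ => hx x
  -- right side as a product
  have hprodR : (∑ x : Fin n → Bool, Real.exp (t * ∑ i, sgn (x i))) =
      (Real.exp t + Real.exp (-t)) ^ n := by
    have e1 : ∀ x : Fin n → Bool, Real.exp (t * ∑ i, sgn (x i))
        = ∏ i, Real.exp (t * sgn (x i)) := by
      intro x
      rw [Finset.mul_sum, Real.exp_sum]
    simp_rw [e1]
    have e2 := Finset.prod_univ_sum (fun _ : Fin n => (Finset.univ : Finset Bool))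
      (fun (_ : Fin n) (b : Bool) => Real.exp (t * sgn b))
    rw [Fintype.piFinset_univ] at e2
    rw [← e2]
    have e3 : (∑ b : Bool, Real.exp (t * sgn b)) = Real.exp t + Real.exp (-t) := by
      rw [Fintype.sum_bool, sgn_true, sgn_false, mul_one, mul_neg_one]
    rw [Finset.prod_congr rfl fun i _ => e3]
    rw [Finset.prod_const, Finset.card_univ, Fintype.card_fin]
  calc (2:ℝ) ^ n * Real.exp (t * c)
      ≤ ∑ x : Fin n → Bool, ∑ j, Real.exp (t * lam x j) := hlow
    _ ≤ (N : ℝ) * ∑ x : Fin n → Bool, Real.exp (t * ∑ i, sgn (x i)) := main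
    _ = (N : ℝ) * (Real.exp t + Real.exp (-t)) ^ n := by rw [hprodR]

/-- `binEnt` in terms of `Real.binEntropy`. -/
lemma binEnt_eq : binEnt = fun p => Real.binEntropy p / Real.log 2 := by
  funext p
  simp only [binEnt, Real.binEntropy, Real.logb, Real.log_inv]
  ring

lemma binEnt_continuous : Continuous binEnt := by
  rw [binEnt_eq]
  exact Real.binEntropy_continuous.div_const _

/-- The arithmetic endgame: taking logarithms with the optimal `t`. -/
lemma endgame {n m : ℕ} {p : ℝ} (hp : 1 / 2 ≤ p) (hp1 : p < 1)
    (H : (2:ℝ) ^ n * Real.exp ((Real.log (p / (1 - p)) / 2) * ((2 * p - 1) * n)) ≤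
      (2:ℝ) ^ m * (Real.exp (Real.log (p / (1 - p)) / 2) +
        Real.exp (-(Real.log (p / (1 - p)) / 2))) ^ n) :
    (1 - binEnt p) * n ≤ m := by
  have hp0 : 0 < p := by linarith
  have h1p : 0 < 1 - p := by linarith
  set r := p / (1 - p) with hr
  have hr0 : 0 < r := div_pos hp0 h1p
  set t := Real.log r / 2 with hT
  have h2t : 2 * t = Real.log p - Real.log (1 - p) := by
    rw [hT, hr, show 2 * (Real.log (p / (1 - p)) / 2) = Real.log (p / (1 - p)) by ring,
      Real.log_div hp0.ne' h1p.ne']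
  have hexp2t : Real.exp (2 * t) = r := by
    rw [hT, show 2 * (Real.log r / 2) = Real.log r by ring, Real.exp_log hr0]
  have hcosh : Real.exp t + Real.exp (-t) = Real.exp (-t) * (r + 1) := by
    have e1 : Real.exp (-t) * Real.exp (2 * t) = Real.exp t := by
      rw [← Real.exp_add]
      ring_nf
    rw [mul_add, mul_one, ← hexp2t, e1]
  have hr1 : r + 1 = 1 / (1 - p) := by
    rw [hr]
    field_simp
    ring
  have hlpos : (0:ℝ) < (2:ℝ) ^ n * Real.exp (t * ((2 * p - 1) * n)) := by positivity
  have Hlog := Real.log_le_log hlpos H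
  rw [Real.log_mul (by positivity) (Real.exp_ne_zero _),
    Real.log_mul (by positivity) (by positivity),
    Real.log_pow, Real.log_pow, Real.log_pow, Real.log_exp] at Hlog
  have hlogsum : Real.log (Real.exp t + Real.exp (-t)) = -t - Real.log (1 - p) := by
    rw [hcosh, Real.log_mul (Real.exp_ne_zero _) (by positivity), Real.log_exp, hr1,
      Real.log_div one_ne_zero h1p.ne', Real.log_one]
    ring
  rw [hlogsum] at Hlog
  have hl2 : (0:ℝ) < Real.log 2 := Real.log_pos (by norm_num)
  have hbin : binEnt p * Real.log 2 = -(p * Real.log p) - (1 - p) * Real.log (1 - p) := by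
    simp only [binEnt, Real.logb]
    field_simp
  have key : Real.log 2 + (t * (2 * p - 1) + t + Real.log (1 - p))
      = Real.log 2 - binEnt p * Real.log 2 := by
    linear_combination p * h2t + hbin
  have keyn := congrArg (fun z : ℝ => (n : ℝ) * z) key
  rw [← mul_le_mul_iff_left₀ hl2]
  nlinarith [Hlog, keyn]

end NayakAux

/-- Nayak's random access code bound: if `ρ_x` is a density matrix on
`ℂ^{2^m}` for each `x ∈ {0,1}^n`, and for each `i ∈ [n]` a two-outcome POVM
`(E_i^0, E_i^1)` recovers the bit `x_i` from `ρ_x` with probability at least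
`p ≥ 1/2`, then `m ≥ (1 - H(p)) n`. -/
theorem stmt8 (n m : ℕ) (hn : 1 ≤ n) (hm : 1 ≤ m) (p : ℝ) (hp : 1 / 2 ≤ p)
    (ρ : (Fin n → Bool) → Matrix (Fin (2 ^ m)) (Fin (2 ^ m)) ℂ)
    (hρ : ∀ x, (ρ x).PosSemidef ∧ (ρ x).trace = 1)
    (E : Fin n → Bool → Matrix (Fin (2 ^ m)) (Fin (2 ^ m)) ℂ)
    (hE : ∀ i, (E i false).PosSemidef ∧ (E i true).PosSemidef ∧
      E i false + E i true = 1)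
    (h : ∀ (x : Fin n → Bool) (i : Fin n), p ≤ ((ρ x * E i (x i)).trace).re) :
    (1 - binEnt p) * n ≤ m := by
  classical
  have hEf : ∀ i, (E i false).PosSemidef := fun i => (hE i).1
  have hEt : ∀ i, (E i true).PosSemidef := fun i => (hE i).2.1
  have hEb : ∀ i (b : Bool), (E i b).PosSemidef := by
    intro i b
    cases b
    · exact hEf i
    · exact hEt i
  have hEsum : ∀ i, E i false + E i true = 1 := fun i => (hE i).2.2
  set D : Fin n → Matrix (Fin (2 ^ m)) (Fin (2 ^ m)) ℂ :=
    fun i => E i true - E i false with hD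
  have hDH : ∀ i, (D i).IsHermitian := fun i => ((hEt i).1).sub ((hEf i).1)
  have hD2 : ∀ i, ((1 : Matrix (Fin (2 ^ m)) (Fin (2 ^ m)) ℂ) - D i * D i).PosSemidef := by
    intro i
    obtain ⟨Q, hQH, hQQ⟩ : ∃ Q : Matrix (Fin (2 ^ m)) (Fin (2 ^ m)) ℂ,
        Qᴴ = Q ∧ Q * Q = E i true :=
      NayakAux.exists_sqrt_aux (hEt i)
    have hEfeq : E i false = 1 - E i true :=
      eq_sub_of_add_eq (hEsum i)
    have key : (1 : Matrix (Fin (2 ^ m)) (Fin (2 ^ m)) ℂ) - D i * D i =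
        (Q + Q) * E i false * (Q + Q)ᴴ := by
      rw [Matrix.conjTranspose_add, hQH]
      show (1 : Matrix (Fin (2 ^ m)) (Fin (2 ^ m)) ℂ) -
        (E i true - E i false) * (E i true - E i false) = _
      rw [hEfeq, ← hQQ]
      noncomm_ring
    rw [key]
    exact (hEf i).mul_mul_conjTranspose_same _
  have htr : ∀ x i, ((ρ x * E i false).trace).re + ((ρ x * E i true).trace).re = 1 := by
    intro x i
    have e : (ρ x * E i false) + (ρ x * E i true) = ρ x := by
      rw [← Matrix.mul_add, hEsum i, Matrix.mul_one]
    have e2 : ((ρ x * E i false).trace + (ρ x * E i true).trace) = (1:ℂ) := by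
      rw [← Matrix.trace_add, e, (hρ x).2]
    have e3 := congrArg Complex.re e2
    simpa using e3
  have hnn : ∀ x i (b : Bool), 0 ≤ ((ρ x * E i b).trace).re := fun x i b =>
    NayakAux.psd_mul_trace_re_nonneg (hρ x).1 (hEb i b)
  have hple : p ≤ 1 := by
    have h1 := h (fun _ => true) ⟨0, hn⟩
    have h2 := htr (fun _ => true) ⟨0, hn⟩
    have h3 := hnn (fun _ => true) ⟨0, hn⟩ false
    linarith
  have main : ∀ p' : ℝ, 1 / 2 ≤ p' → p' < 1 →
      (∀ (x : Fin n → Bool) (i : Fin n), p' ≤ ((ρ x * E i (x i)).trace).re) →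
      (1 - binEnt p') * n ≤ m := by
    intro p' hp' hp'1 h'
    set t := Real.log (p' / (1 - p')) / 2 with hT
    have hp'0 : 0 < p' := by linarith
    have h1p' : 0 < 1 - p' := by linarith
    have ht : 0 ≤ t := by
      have h1 : 1 ≤ p' / (1 - p') := (one_le_div h1p').mpr (by linarith)
      have h2 := Real.log_nonneg h1
      rw [hT]
      positivity
    have hc : ∀ x : Fin n → Bool, ∃ σ : Matrix (Fin (2 ^ m)) (Fin (2 ^ m)) ℂ,
        σ.PosSemidef ∧ σ.trace = 1 ∧
        (2 * p' - 1) * n ≤ ((σ * ∑ i, ((NayakAux.sgn (x i) : ℂ) • D i)).trace).re := by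
      intro x
      refine ⟨ρ x, (hρ x).1, (hρ x).2, ?_⟩
      have e1 : (ρ x * ∑ i, ((NayakAux.sgn (x i) : ℂ) • D i)).trace
          = ∑ i, ((NayakAux.sgn (x i) : ℂ)) * (ρ x * D i).trace := by
        rw [Finset.mul_sum, Matrix.trace_sum]
        refine Finset.sum_congr rfl fun i _ => ?_
        rw [Matrix.mul_smul, Matrix.trace_smul, smul_eq_mul]
      have e2 : ∀ i, (2 * p' - 1) ≤ NayakAux.sgn (x i) * ((ρ x * D i).trace).re := by
        intro i
        have hd : ((ρ x * D i).trace).re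
            = ((ρ x * E i true).trace).re - ((ρ x * E i false).trace).re := by
          show ((ρ x * (E i true - E i false)).trace).re = _
          rw [Matrix.mul_sub, Matrix.trace_sub, Complex.sub_re]
        have h2 := htr x i
        have h3 := h' x i
        cases hxi : x i
        · rw [hxi] at h3
          rw [NayakAux.sgn_false, hd]
          linarith
        · rw [hxi] at h3
          rw [NayakAux.sgn_true, hd]
          linarith
      calc (2 * p' - 1) * (n : ℝ) = ∑ _i : Fin n, (2 * p' - 1) := by
            rw [Finset.sum_const, Finset.card_univ, Fintype.card_fin, nsmul_eq_mul]
            ring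
        _ ≤ ∑ i, NayakAux.sgn (x i) * ((ρ x * D i).trace).re :=
            Finset.sum_le_sum fun i _ => e2 i
        _ = ((ρ x * ∑ i, ((NayakAux.sgn (x i) : ℂ) • D i)).trace).re := by
            rw [e1, Complex.re_sum]
            exact Finset.sum_congr rfl fun i _ => (Complex.re_ofReal_mul _ _).symm
    have hcore := NayakAux.core (n := n) (N := 2 ^ m) (by positivity) t
      ((2 * p' - 1) * (n : ℝ)) ht D hDH hD2 hc
    have hcast : ((2 ^ m : ℕ) : ℝ) = (2:ℝ) ^ m := by push_cast; ring
    rw [hcast] at hcore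
    rw [hT] at hcore
    exact NayakAux.endgame hp' hp'1 hcore
  rcases lt_or_ge p 1 with hp1 | hp1
  · exact main p hp hp1 h
  · have hpe : p = 1 := le_antisymm hple hp1
    subst hpe
    have hbe : binEnt 1 = 0 := by simp [binEnt]
    have hseq : ∀ k : ℕ, (1 - binEnt (1 - (1/2 : ℝ) ^ (k+1))) * n ≤ m := by
      intro k
      have h1 : (0:ℝ) < (1/2 : ℝ) ^ (k+1) := by positivity
      have h2 : ((1:ℝ)/2) ^ (k+1) ≤ ((1:ℝ)/2) ^ 1 :=
        pow_le_pow_of_le_one (by norm_num) (by norm_num) (by omega)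
      rw [pow_one] at h2
      refine main _ (by linarith) (by linarith) fun x i => ?_
      have h3 := h x i
      linarith
    have hu : Filter.Tendsto (fun k : ℕ => 1 - (1/2 : ℝ) ^ (k+1)) Filter.atTop (nhds 1) := by
      have h0 : Filter.Tendsto (fun k : ℕ => (1/2 : ℝ) ^ k) Filter.atTop (nhds 0) :=
        tendsto_pow_atTop_nhds_zero_of_lt_one (by norm_num) (by norm_num)
      have h1 : Filter.Tendsto (fun k : ℕ => (1/2 : ℝ) ^ (k+1)) Filter.atTop (nhds 0) :=
        h0.comp (Filter.tendsto_add_atTop_nat 1)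
      have h2 := h1.const_sub 1
      simpa using h2
    have hlim : Filter.Tendsto (fun k : ℕ => (1 - binEnt (1 - (1/2 : ℝ) ^ (k+1))) * (n:ℝ))
        Filter.atTop (nhds ((1 - binEnt 1) * n)) := by
      have hb := (NayakAux.binEnt_continuous.tendsto 1).comp hu
      exact (tendsto_const_nhds.sub hb).mul_const (n:ℝ)
    have hfin := le_of_tendsto hlim (Filter.Eventually.of_forall hseq)
    rw [hbe] at hfin
    rw [hbe]
    exact hfin
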